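/- A map f : X → Y between metric spaces is Lipschitz light if and only if there exists a constant c > 0 such that for every r > 0 and every r-connected subset K ⊆ X, one has c^{-1}·diam(K) − r ≤ diam(f(K)) ≤ c·diam(K). -/

import Mathlib

open Metric Set
open scoped ENNReal NNReal

/-- `l` is an `r`-path (consecutive distances at most `r`) lying in the set `S`. -/
def IsRPathIn {X : Type*} [PseudoMetricSpace X] (r : ℝ) (S : Set X) (l : List X) : Prop :=
  (∀ z ∈ l, z ∈ S) ∧ l.Chain' (fun a b => dist a b ≤ r)

/-- `x` and `y` lie in the same `r`-component of `S`: they are joined by an `r`-path in `S`. -/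
def SameRComponent {X : Type*} [PseudoMetricSpace X] (r : ℝ) (S : Set X) (x y : X) : Prop :=
  ∃ l : List X, IsRPathIn r S l ∧ l.head? = some x ∧ l.getLast? = some y

/-- `f` is Lipschitz light with constant `C`: it is `C`-Lipschitz and, for every `r > 0` and
every `W ⊆ Y` with `diam W ≤ r`, every `r`-component of `f ⁻¹' W` has diameter at most `C * r`. -/
def LipschitzLightWith {X Y : Type*} [PseudoMetricSpace X] [PseudoMetricSpace Y]
    (C : ℝ) (f : X → Y) : Prop :=
  (∀ x y : X, dist (f x) (f y) ≤ C * dist x y) ∧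
  ∀ r : ℝ, 0 < r → ∀ W : Set Y, EMetric.diam W ≤ ENNReal.ofReal r →
    ∀ x y : X, SameRComponent r (f ⁻¹' W) x y → dist x y ≤ C * r

section Helpers

variable {X : Type*} [PseudoMetricSpace X] {r : ℝ} {S T : Set X} {x y z : X}

lemma sameR_refl (hx : x ∈ S) : SameRComponent r S x x :=
  ⟨[x], ⟨by simpa using hx, by simp [List.Chain']⟩, rfl, rfl⟩

lemma sameR_symm (h : SameRComponent r S x y) : SameRComponent r S y x := by
  obtain ⟨l, ⟨hmem, hch⟩, hh, hg⟩ := h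
  exact ⟨l.reverse, ⟨fun z hz => hmem z (by simpa using hz),
    List.isChain_reverse.mpr (hch.imp fun a b hab => show dist b a ≤ r by simpa [dist_comm] using hab)⟩,
    by simpa using hg, by simpa using hh⟩

lemma sameR_mem_left (h : SameRComponent r S x y) : x ∈ S := by
  obtain ⟨l, ⟨hmem, _⟩, hh, _⟩ := h
  exact hmem x (List.mem_of_mem_head? hh)

lemma sameR_mem_right (h : SameRComponent r S x y) : y ∈ S :=
  sameR_mem_left (sameR_symm h)

lemma sameR_trans (hr : 0 ≤ r) (h₁ : SameRComponent r S x y)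
    (h₂ : SameRComponent r S y z) : SameRComponent r S x z := by
  obtain ⟨l, ⟨hmem, hch⟩, hh, hg⟩ := h₁
  obtain ⟨l', ⟨hmem', hch'⟩, hh', hg'⟩ := h₂
  refine ⟨l ++ l', ⟨fun w hw => ?_, List.isChain_append.mpr ⟨hch, hch', ?_⟩⟩, ?_, ?_⟩
  · rcases List.mem_append.mp hw with h | h
    · exact hmem w h
    · exact hmem' w h
  · intro a ha b hb
    rw [hg] at ha; rw [hh'] at hb
    simp only [Option.mem_def, Option.some.injEq] at ha hb
    subst ha; subst hb; simpa using hr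
  · rw [List.head?_append_of_ne_nil, hh]
    intro hnil; rw [hnil] at hh; simp at hh
  · rw [List.getLast?_append, hg']; rfl

lemma sameR_mono {r' : ℝ} (hrr : r ≤ r') (hST : S ⊆ T) (h : SameRComponent r S x y) :
    SameRComponent r' T x y := by
  obtain ⟨l, ⟨hmem, hch⟩, hh, hg⟩ := h
  exact ⟨l, ⟨fun w hw => hST (hmem w hw), hch.imp fun a b hab => hab.trans hrr⟩, hh, hg⟩

/-- Every point on an `r`-path starting at `x` is in the same `r`-component as `x`. -/
lemma sameR_of_mem_path (hr : 0 ≤ r) :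
    ∀ l : List X, IsRPathIn r S l → ∀ x, l.head? = some x → ∀ z ∈ l, SameRComponent r S x z := by
  intro l
  induction l with
  | nil => simp
  | cons a t ih =>
    intro ⟨hmem, hch⟩ x hh z hz
    simp only [List.head?_cons, Option.some.injEq] at hh
    subst hh
    rcases List.mem_cons.mp hz with rfl | hz
    · exact sameR_refl (hmem z (List.mem_cons_self))
    · match t, hz with
      | b :: t', hz =>
        have hab : dist a b ≤ r := (List.isChain_cons_cons.mp hch).1
        have h1 : SameRComponent r S a b :=
          ⟨[a, b], ⟨fun w hw => by
            simp only [List.mem_cons, List.not_mem_nil, or_false] at hw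
            rcases hw with rfl | rfl
            · exact hmem w (List.mem_cons_self)
            · exact hmem w (List.mem_cons_of_mem _ (List.mem_cons_self)),
            by simpa [List.Chain'] using hab⟩, rfl, rfl⟩
        have h2 : SameRComponent r S b z :=
          ih ⟨fun w hw => hmem w (List.mem_cons_of_mem _ hw), hch.tail⟩ b rfl z hz
        exact sameR_trans hr h1 h2

lemma sameR_two {u v : X} (hu : u ∈ S) (hv : v ∈ S) (hd : dist u v ≤ r) :
    SameRComponent r S u v :=
  ⟨[u, v], ⟨fun w hw => by
      simp only [List.mem_cons, List.not_mem_nil, or_false] at hw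
      rcases hw with rfl | rfl <;> assumption, by simpa [List.Chain'] using hd⟩, rfl, rfl⟩


end Helpers

/-- A map is Lipschitz light iff there is `c > 0` such that for every `r > 0` and every
`r`-connected set `K`, `c⁻¹ · diam K - r ≤ diam (f '' K) ≤ c · diam K`. -/
theorem lipschitzLight_iff_diam_control {X Y : Type*} [MetricSpace X] [MetricSpace Y]
    (f : X → Y) :
    (∃ C : ℝ, 0 < C ∧ LipschitzLightWith C f) ↔
      ∃ c : ℝ, 0 < c ∧ ∀ r : ℝ, 0 < r → ∀ K : Set X,
        (∀ x ∈ K, ∀ y ∈ K, SameRComponent r K x y) →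
          ENNReal.ofReal c⁻¹ * EMetric.diam K - ENNReal.ofReal r ≤ EMetric.diam (f '' K) ∧
            EMetric.diam (f '' K) ≤ ENNReal.ofReal c * EMetric.diam K := by
  constructor
  · rintro ⟨C, hC, hLip, hLight⟩
    refine ⟨C, hC, fun r hr K hK => ?_⟩
    have upper : EMetric.diam (f '' K) ≤ ENNReal.ofReal C * EMetric.diam K := by
      apply EMetric.diam_le
      rintro _ ⟨u, hu, rfl⟩ _ ⟨v, hv, rfl⟩
      calc edist (f u) (f v) = ENNReal.ofReal (dist (f u) (f v)) := edist_dist _ _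
        _ ≤ ENNReal.ofReal (C * dist u v) := ENNReal.ofReal_le_ofReal (hLip u v)
        _ = ENNReal.ofReal C * ENNReal.ofReal (dist u v) := ENNReal.ofReal_mul hC.le
        _ = ENNReal.ofReal C * edist u v := by rw [edist_dist]
        _ ≤ ENNReal.ofReal C * EMetric.diam K :=
          mul_le_mul_right (EMetric.edist_le_diam_of_mem hu hv) _
    refine ⟨?_, upper⟩
    by_cases htop : EMetric.diam (f '' K) = ⊤
    · simp [htop]
    set s : ℝ := (EMetric.diam (f '' K)).toReal with hs_def
    have hs : 0 ≤ s := ENNReal.toReal_nonneg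
    set r' : ℝ := max r s with hr'_def
    have hr' : 0 < r' := lt_max_of_lt_left hr
    have hW : EMetric.diam (f '' K) ≤ ENNReal.ofReal r' := by
      rw [← ENNReal.ofReal_toReal htop]
      exact ENNReal.ofReal_le_ofReal (le_max_right r s)
    have hdistK : ∀ u ∈ K, ∀ v ∈ K, dist u v ≤ C * r' := by
      intro u hu v hv
      exact hLight r' hr' (f '' K) hW u v
        (sameR_mono (le_max_left r s) (Set.subset_preimage_image f K) (hK u hu v hv))
    have hdiamK : EMetric.diam K ≤ ENNReal.ofReal (C * r') := by
      apply EMetric.diam_le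
      intro u hu v hv
      rw [edist_dist]
      exact ENNReal.ofReal_le_ofReal (hdistK u hu v hv)
    rw [tsub_le_iff_right]
    calc ENNReal.ofReal C⁻¹ * EMetric.diam K
        ≤ ENNReal.ofReal C⁻¹ * ENNReal.ofReal (C * r') := mul_le_mul_right hdiamK _
      _ = ENNReal.ofReal (C⁻¹ * (C * r')) := (ENNReal.ofReal_mul (by positivity)).symm
      _ = ENNReal.ofReal r' := by rw [inv_mul_cancel_left₀ hC.ne']
      _ ≤ ENNReal.ofReal (s + r) :=
          ENNReal.ofReal_le_ofReal (max_le (le_add_of_nonneg_left hs) (le_add_of_nonneg_right hr.le))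
      _ = ENNReal.ofReal s + ENNReal.ofReal r := ENNReal.ofReal_add hs hr.le
      _ = EMetric.diam (f '' K) + ENNReal.ofReal r := by rw [hs_def, ENNReal.ofReal_toReal htop]
  · rintro ⟨c, hc, hcd⟩
    refine ⟨2 * c, by positivity, fun x y => ?_, fun r hr W hW x y hxy => ?_⟩
    · by_cases hxy : x = y
      · subst hxy; simp
      · have hr : 0 < dist x y := dist_pos.mpr hxy
        have hK : ∀ u ∈ ({x, y} : Set X), ∀ v ∈ ({x, y} : Set X),
            SameRComponent (dist x y) ({x, y} : Set X) u v := by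
          rintro u hu v hv
          refine sameR_two hu hv ?_
          rcases hu with rfl | rfl <;> rcases hv with rfl | rfl <;>
            simp [dist_comm, hr.le, dist_nonneg]
        have h2 := (hcd (dist x y) hr {x, y} hK).2
        rw [Set.image_pair, EMetric.diam, EMetric.diam, EMetric.diam_pair, EMetric.diam_pair, edist_dist, edist_dist,
          ← ENNReal.ofReal_mul hc.le, ENNReal.ofReal_le_ofReal_iff (by positivity)] at h2
        nlinarith [dist_nonneg (x := x) (y := y)]
    · set K : Set X := {z | SameRComponent r (f ⁻¹' W) x z} with hK_def
      have hxK : x ∈ K := sameR_refl (sameR_mem_left hxy)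
      have hyK : y ∈ K := hxy
      have hKsub : K ⊆ f ⁻¹' W := fun z hz => sameR_mem_right hz
      have hK : ∀ u ∈ K, ∀ v ∈ K, SameRComponent r K u v := by
        intro u hu v hv
        obtain ⟨l, hl, hh, hg⟩ := sameR_trans hr.le (sameR_symm hu) hv
        refine ⟨l, ⟨fun z hz => ?_, hl.2⟩, hh, hg⟩
        exact sameR_trans hr.le hu (sameR_of_mem_path hr.le l hl u hh z hz)
      have h1 := (hcd r hr K hK).1
      have hfK : EMetric.diam (f '' K) ≤ ENNReal.ofReal r :=
        (EMetric.diam_mono (Set.image_subset_iff.mpr hKsub)).trans hW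
      have h3 : ENNReal.ofReal c⁻¹ * EMetric.diam K ≤ ENNReal.ofReal r + ENNReal.ofReal r :=
        tsub_le_iff_right.mp (h1.trans hfK)
      have h4 : EMetric.diam K ≤ ENNReal.ofReal (2 * c * r) := by
        have heq : EMetric.diam K = ENNReal.ofReal c * (ENNReal.ofReal c⁻¹ * EMetric.diam K) := by
          rw [← mul_assoc, ← ENNReal.ofReal_mul hc.le, mul_inv_cancel₀ hc.ne',
            ENNReal.ofReal_one, one_mul]
        calc EMetric.diam K
            ≤ ENNReal.ofReal c * (ENNReal.ofReal r + ENNReal.ofReal r) :=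
              heq.le.trans (mul_le_mul_right h3 _)
          _ = ENNReal.ofReal (2 * c * r) := by
              rw [← ENNReal.ofReal_add hr.le hr.le, ← ENNReal.ofReal_mul hc.le]
              ring_nf
      have := (EMetric.edist_le_diam_of_mem hxK hyK).trans h4
      rw [edist_dist, ENNReal.ofReal_le_ofReal_iff (by positivity)] at this
      exact this
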